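/- arXiv:1212.3815 — 2 statements merged into one kernel-verified Lean document; each statement's English description precedes it below -/
import Mathlib

section
/- Let C be an extremal set (ε_C = d_C) in a finite simple connected graph Γ, with antipodal set D = C_{ε_C}. Then every eigenvalue in the C-local spectrum also lies in the D-local spectrum, i.e. ev_C Γ ⊆ ev_D Γ. -/
open Finset Polynomial BigOperators
open scoped Classical

noncomputable section

/-- The eigenspace of a real matrix `A` (viewed as an operator on Euclidean space)
for the value `μ`. -/
def eigSp {n : ℕ} (A : Matrix (Fin n) (Fin n) ℝ) (μ : ℝ) :
    Submodule ℝ (EuclideanSpace ℝ (Fin n)) :=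
  Module.End.eigenspace (Matrix.toEuclideanLin A) μ

/-- Orthogonal projection onto the `μ`-eigenspace of `A`. -/
def eigProj {n : ℕ} (A : Matrix (Fin n) (Fin n) ℝ) (μ : ℝ) (v : EuclideanSpace ℝ (Fin n)) :
    EuclideanSpace ℝ (Fin n) :=
  (Submodule.orthogonalProjection (eigSp A μ) v : EuclideanSpace ℝ (Fin n))

/-- The weighted characteristic vector `ρS = Σ_{i∈S} ν_i e_i`. -/
def rho {n : ℕ} (ν : EuclideanSpace ℝ (Fin n)) (S : Finset (Fin n)) :
    EuclideanSpace ℝ (Fin n) :=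
  WithLp.toLp 2 (fun i => if i ∈ S then ν i else 0)

/-- The unit vector `e_S = ρS / ‖ρS‖`. -/
def unitVec {n : ℕ} (ν : EuclideanSpace ℝ (Fin n)) (S : Finset (Fin n)) :
    EuclideanSpace ℝ (Fin n) :=
  (‖rho ν S‖)⁻¹ • rho ν S

/-- The `S`-local multiplicity of `μ`: `m_S(μ) = ‖E_μ e_S‖²`. -/
def mloc {n : ℕ} (A : Matrix (Fin n) (Fin n) ℝ) (ν : EuclideanSpace ℝ (Fin n))
    (S : Finset (Fin n)) (μ : ℝ) : ℝ :=
  ‖eigProj A μ (unitVec ν S)‖ ^ 2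

/-- The `S`-local spectrum: the set of `μ` whose eigenspace sees `ρS`. -/
def evloc {n : ℕ} (A : Matrix (Fin n) (Fin n) ℝ) (ν : EuclideanSpace ℝ (Fin n))
    (S : Finset (Fin n)) : Set ℝ :=
  {μ | eigProj A μ (rho ν S) ≠ 0}

/-- Distance from a vertex `i` to a set of vertices `S`. -/
def dSet {n : ℕ} (G : SimpleGraph (Fin n)) (S : Finset (Fin n)) (i : Fin n) : ℕ :=
  sInf {k | ∃ j ∈ S, G.dist i j = k}

/-- Eccentricity (covering radius) of a vertex set `S`. -/
def eccS {n : ℕ} (G : SimpleGraph (Fin n)) (S : Finset (Fin n)) : ℕ :=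
  Finset.univ.sup (dSet G S)

/-- The `k`-th subconstituent `S_k = {i : dist(i,S) = k}`. -/
def subcons {n : ℕ} (G : SimpleGraph (Fin n)) (S : Finset (Fin n)) (k : ℕ) :
    Finset (Fin n) :=
  Finset.univ.filter (fun i => dSet G S i = k)

/-- `p(A)·v` for a polynomial `p`, a matrix `A` and a Euclidean vector `v`. -/
def aevalVec {n : ℕ} (A : Matrix (Fin n) (Fin n) ℝ) (p : Polynomial ℝ)
    (v : EuclideanSpace ℝ (Fin n)) : EuclideanSpace ℝ (Fin n) :=
  WithLp.toLp 2 ((Polynomial.aeval A p).mulVec v)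

/-- Moment-like parameter `π_l = ∏_{h≠l} |μ_l − μ_h|` for an enumeration `μ`. -/
def piC {d : ℕ} (μ : Fin (d + 1) → ℝ) (l : Fin (d + 1)) : ℝ :=
  ∏ h ∈ Finset.univ.erase l, |μ l - μ h|

open scoped RealInnerProductSpace

lemma aevalVec_eq_aeval_lin {n : ℕ} (A : Matrix (Fin n) (Fin n) ℝ) (p : ℝ[X]) :
    ∀ v : EuclideanSpace ℝ (Fin n),
      (Polynomial.aeval A p).mulVec v = Polynomial.aeval (Matrix.toEuclideanLin A) p v := by
  induction p using Polynomial.induction_on with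
  | C a =>
      intro v
      rw [Polynomial.aeval_C, Polynomial.aeval_C, Algebra.algebraMap_eq_smul_one,
        Matrix.smul_mulVec, Matrix.one_mulVec, Algebra.algebraMap_eq_smul_one]
      rfl
  | add p q hp hq =>
      intro v
      simp [Matrix.add_mulVec, hp v, hq v]
  | monomial k a ih =>
      intro v
      have h1 : (Polynomial.C a * Polynomial.X ^ (k+1) : ℝ[X])
          = (Polynomial.C a * Polynomial.X ^ k) * Polynomial.X := by ring
      have e1 : Polynomial.aeval A ((Polynomial.C a * Polynomial.X ^ k) * Polynomial.X)
          = Polynomial.aeval A (Polynomial.C a * Polynomial.X ^ k) * A := by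
        rw [map_mul]; simp
      have e2 : Polynomial.aeval (Matrix.toEuclideanLin A)
            ((Polynomial.C a * Polynomial.X ^ k) * Polynomial.X)
          = Polynomial.aeval (Matrix.toEuclideanLin A) (Polynomial.C a * Polynomial.X ^ k) *
            Matrix.toEuclideanLin A := by
        rw [map_mul]; simp
      rw [h1, e1, e2, ← Matrix.mulVec_mulVec, ih (WithLp.toLp 2 (A.mulVec v))]
      rfl

lemma inner_basis_sum {n : ℕ} (b : OrthonormalBasis (Fin n) ℝ (EuclideanSpace ℝ (Fin n)))
    (s : Finset (Fin n)) (f : Fin n → ℝ) (j : Fin n) :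
    ⟪b j, (∑ i ∈ s, f i • b i)⟫ = if j ∈ s then f j else 0 := by
  rw [inner_sum]
  simp_rw [real_inner_smul_right, orthonormal_iff_ite.mp b.orthonormal]
  simp [Finset.sum_ite_eq']

lemma projEq {n : ℕ} {A : Matrix (Fin n) (Fin n) ℝ}
    (hsym : (Matrix.toEuclideanLin A).IsSymmetric)
    (μ : ℝ) (v : EuclideanSpace ℝ (Fin n)) :
    eigProj A μ v = ∑ i ∈ Finset.univ.filter
        (fun i => hsym.eigenvalues finrank_euclideanSpace_fin i = μ),
      (⟪hsym.eigenvectorBasis finrank_euclideanSpace_fin i, v⟫ :ℝ) •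
        hsym.eigenvectorBasis finrank_euclideanSpace_fin i := by
  set b := hsym.eigenvectorBasis finrank_euclideanSpace_fin with hb
  set lam := hsym.eigenvalues finrank_euclideanSpace_fin with hlam
  rw [eigProj, ← Submodule.starProjection_apply]; apply Submodule.eq_starProjection_of_mem_orthogonal
  · apply Submodule.sum_mem
    intro i hi
    apply Submodule.smul_mem
    have h2 : hsym.eigenvalues finrank_euclideanSpace_fin i = μ := by
      have := (Finset.mem_filter.mp hi).2
      rwa [hlam] at this
    have h3 := hsym.apply_eigenvectorBasis finrank_euclideanSpace_fin i
    rw [h2] at h3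
    exact Module.End.mem_eigenspace_iff.mpr h3
  · rw [Submodule.mem_orthogonal]
    intro u hu
    have hsplit := Finset.sum_filter_add_sum_filter_not Finset.univ
      (fun i => lam i = μ) (fun i => (⟪b i, v⟫ : ℝ) • b i)
    have hv : v - ∑ i ∈ Finset.univ.filter (fun i => lam i = μ), (⟪b i, v⟫ : ℝ) • b i
        = ∑ i ∈ Finset.univ.filter (fun i => ¬ lam i = μ), (⟪b i, v⟫ : ℝ) • b i := by
      rw [sub_eq_iff_eq_add, add_comm, hsplit]
      exact (b.sum_repr' v).symm
    rw [hv, inner_sum]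
    apply Finset.sum_eq_zero
    intro i hi
    have hne : lam i ≠ μ := (Finset.mem_filter.mp hi).2
    have hbe : b i ∈ Module.End.eigenspace (Matrix.toEuclideanLin A) (lam i) :=
      (hsym.hasEigenvector_eigenvectorBasis finrank_euclideanSpace_fin i).1
    have h0 : ⟪u, b i⟫ = 0 :=
      hsym.orthogonalFamily_eigenspaces (Ne.symm hne) ⟨u, hu⟩ ⟨b i, hbe⟩
    rw [real_inner_smul_right, h0, mul_zero]

lemma projZero_iff {n : ℕ} {A : Matrix (Fin n) (Fin n) ℝ}
    (hsym : (Matrix.toEuclideanLin A).IsSymmetric)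
    (μ : ℝ) (v : EuclideanSpace ℝ (Fin n)) :
    eigProj A μ v = 0 ↔ ∀ i, hsym.eigenvalues finrank_euclideanSpace_fin i = μ →
      ⟪hsym.eigenvectorBasis finrank_euclideanSpace_fin i, v⟫ = 0 := by
  set b := hsym.eigenvectorBasis finrank_euclideanSpace_fin with hb
  set lam := hsym.eigenvalues finrank_euclideanSpace_fin with hlam
  rw [projEq hsym μ v]
  constructor
  · intro h0 j hj
    have hjf : j ∈ Finset.univ.filter (fun i => lam i = μ) :=
      Finset.mem_filter.mpr ⟨Finset.mem_univ j, hj⟩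
    have h2 := inner_basis_sum b (Finset.univ.filter (fun i => lam i = μ))
      (fun i => ⟪b i, v⟫) j
    rw [h0, inner_zero_right, if_pos hjf] at h2
    exact h2.symm
  · intro h
    apply Finset.sum_eq_zero
    intro i hi
    rw [h i (Finset.mem_filter.mp hi).2, zero_smul]

theorem local_spectrum_subset_antipodal {n : ℕ} (hn : 0 < n) (G : SimpleGraph (Fin n)) [DecidableRel G.Adj]
    (hconn : G.Connected)
    (ν : EuclideanSpace ℝ (Fin n)) (hν : ∀ i, 0 < ν i) (lam0 : ℝ)
    (hPerron : (G.adjMatrix ℝ).mulVec ν = lam0 • ν)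
    (C : Finset (Fin n)) (hC : C.Nonempty)
    (hext : eccS G C + 1 = (evloc (G.adjMatrix ℝ) ν C).ncard) :
    evloc (G.adjMatrix ℝ) ν C ⊆ evloc (G.adjMatrix ℝ) ν (subcons G C (eccS G C)) := by
  intro μl hμl
  have hHerm : (G.adjMatrix ℝ).IsHermitian := by
    ext i j
    simp [Matrix.conjTranspose_apply, SimpleGraph.adjMatrix_apply, SimpleGraph.adj_comm]
  have hsym : (Matrix.toEuclideanLin (G.adjMatrix ℝ)).IsSymmetric :=
    Matrix.isHermitian_iff_isSymmetric.mp hHerm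
  set b := hsym.eigenvectorBasis finrank_euclideanSpace_fin with hbdef
  set lam := hsym.eigenvalues finrank_euclideanSpace_fin with hlamdef
  set ρC := rho ν C with hρC
  set ε := eccS G C with hεdef
  set D := subcons G C ε with hDdef
  set ρD := rho ν D with hρD
  -- the local spectrum as a finite set
  set Λ : Finset ℝ := (Finset.univ.filter (fun i => (⟪b i, ρC⟫ : ℝ) ≠ 0)).image lam with hΛ
  have hevC : evloc (G.adjMatrix ℝ) ν C = ↑Λ := by
    ext μ
    simp only [evloc, Set.mem_setOf_eq, hΛ, Finset.coe_image, Set.mem_image, Finset.mem_coe,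
      Finset.mem_filter, Finset.mem_univ, true_and]
    constructor
    · intro h
      by_contra hc
      push_neg at hc
      apply h
      rw [projZero_iff hsym]
      intro i hi
      by_contra hci
      exact hc i hci hi
    · rintro ⟨i, hci, hi⟩ h0
      rw [projZero_iff hsym] at h0
      exact hci (h0 i hi)
  have hμlΛ : μl ∈ Λ := by
    rw [hevC] at hμl; exact_mod_cast hμl
  have hcard : Λ.card = ε + 1 := by
    have h1 : (evloc (G.adjMatrix ℝ) ν C).ncard = Λ.card := by
      rw [hevC, Set.ncard_coe_finset]
    rw [h1] at hext
    omega
  -- the Hoffman-like polynomial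
  set p : ℝ[X] := ∏ μ ∈ Λ.erase μl, (Polynomial.X - Polynomial.C μ) with hp
  have hmonic : p.Monic := monic_prod_of_monic _ _ (fun μ _ => monic_X_sub_C μ)
  have hdeg : p.natDegree = ε := by
    rw [hp, Polynomial.natDegree_prod_of_monic _ _ (fun μ _ => monic_X_sub_C μ)]
    simp only [Polynomial.natDegree_X_sub_C, Finset.sum_const, smul_eq_mul, mul_one]
    rw [Finset.card_erase_of_mem hμlΛ, hcard]
    omega
  have hpeval0 : ∀ x ∈ Λ.erase μl, p.eval x = 0 := by
    intro x hx
    rw [hp, Polynomial.eval_prod]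
    exact Finset.prod_eq_zero hx (by simp)
  have hpevall : p.eval μl ≠ 0 := by
    rw [hp, Polynomial.eval_prod, Finset.prod_ne_zero_iff]
    intro x hx
    have hne := (Finset.mem_erase.mp hx).1
    simp only [Polynomial.eval_sub, Polynomial.eval_X, Polynomial.eval_C]
    exact sub_ne_zero_of_ne (Ne.symm hne)
  set w : EuclideanSpace ℝ (Fin n) := WithLp.toLp 2 ((Polynomial.aeval (G.adjMatrix ℝ) p).mulVec ρC) with hw
  have hw1 : w = ∑ i, (((⟪b i, ρC⟫ : ℝ)) * p.eval (lam i)) • b i := by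
    rw [hw, aevalVec_eq_aeval_lin, WithLp.toLp_ofLp]
    conv_lhs => rw [← b.sum_repr' ρC]
    rw [map_sum]
    refine Finset.sum_congr rfl (fun i _ => ?_)
    rw [map_smul, Module.End.aeval_apply_of_hasEigenvector
      (hsym.hasEigenvector_eigenvectorBasis finrank_euclideanSpace_fin i), smul_smul]
    norm_cast
  have hwj : ∀ j : Fin n, w j = ∑ k ∈ Finset.range (p.natDegree + 1),
      p.coeff k * (((G.adjMatrix ℝ)^k).mulVec ρC j) := by
    intro j
    rw [hw, Polynomial.aeval_eq_sum_range]
    simp only [PiLp.toLp_apply, Matrix.mulVec, dotProduct, Matrix.sum_apply, Finset.sum_apply,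
      Matrix.smul_apply, smul_eq_mul, Finset.sum_mul, Finset.mul_sum]
    rw [Finset.sum_comm]
    refine Finset.sum_congr rfl (fun k _ => ?_)
    refine Finset.sum_congr rfl (fun u _ => ?_)
    ring
  -- distance facts
  have hdSet_exists : ∀ j : Fin n, ∃ u ∈ C, G.dist j u = dSet G C j := by
    intro j
    obtain ⟨c0, hc0⟩ := hC
    have hne : {k | ∃ u ∈ C, G.dist j u = k}.Nonempty := ⟨G.dist j c0, ⟨c0, hc0, rfl⟩⟩
    exact Nat.sInf_mem hne
  have hdSet_le : ∀ j u, u ∈ C → dSet G C j ≤ G.dist j u := fun j u hu =>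
    Nat.sInf_le ⟨u, hu, rfl⟩
  -- entries of powers below ε vanish on D
  have hvan : ∀ j ∈ D, ∀ k < ε, (((G.adjMatrix ℝ)^k).mulVec ρC) j = 0 := by
    intro j hj k hk
    have hdj : dSet G C j = ε := (Finset.mem_filter.mp hj).2
    show ∑ u, ((G.adjMatrix ℝ)^k) j u * ρC u = 0
    apply Finset.sum_eq_zero
    intro u _
    by_cases huC : u ∈ C
    · have hA0 : ((G.adjMatrix ℝ)^k) j u = 0 := by
        rw [SimpleGraph.adjMatrix_pow_apply_eq_card_walk, Nat.cast_eq_zero,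
          Fintype.card_eq_zero_iff]
        constructor
        intro q
        have hq : (q : G.Walk j u).length = k := q.2
        have h1 : G.dist j u ≤ k := hq ▸ SimpleGraph.dist_le _
        have h2 : ε ≤ G.dist j u := hdj ▸ hdSet_le j u huC
        omega
      rw [hA0, zero_mul]
    · have : ρC u = 0 := by simp [hρC, rho, huC]
      rw [this, mul_zero]
  -- the ε-th power entry is positive on D
  have hposε : ∀ j ∈ D, 0 < (((G.adjMatrix ℝ)^ε).mulVec ρC) j := by
    intro j hj
    have hdj : dSet G C j = ε := (Finset.mem_filter.mp hj).2
    obtain ⟨u0, hu0C, hu0d⟩ := hdSet_exists j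
    show 0 < ∑ u, ((G.adjMatrix ℝ)^ε) j u * ρC u
    have hnn : ∀ u, 0 ≤ ((G.adjMatrix ℝ)^ε) j u * ρC u := by
      intro u
      apply mul_nonneg
      · rw [SimpleGraph.adjMatrix_pow_apply_eq_card_walk]
        exact Nat.cast_nonneg _
      · by_cases huC : u ∈ C
        · simp only [hρC, rho, if_pos huC]
          exact (hν u).le
        · simp [hρC, rho, huC]
    apply Finset.sum_pos' (fun u _ => hnn u)
    refine ⟨u0, Finset.mem_univ _, ?_⟩
    apply mul_pos
    · rw [SimpleGraph.adjMatrix_pow_apply_eq_card_walk]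
      have : 0 < Fintype.card {q : G.Walk j u0 | q.length = ε} := by
        rw [Fintype.card_pos_iff]
        obtain ⟨q, hq⟩ := (hconn j u0).exists_walk_length_eq_dist
        exact ⟨⟨q, by rw [Set.mem_setOf_eq, hq, hu0d, hdj]⟩⟩
      exact_mod_cast this
    · simp only [hρC, rho, if_pos hu0C]
      exact hν u0
  have hwpos : ∀ j ∈ D, 0 < w j := by
    intro j hj
    rw [hwj j, hdeg, Finset.sum_range_succ]
    have h0 : ∑ k ∈ Finset.range ε, p.coeff k * (((G.adjMatrix ℝ)^k).mulVec ρC) j = 0 :=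
      Finset.sum_eq_zero fun k hk => by
        rw [hvan j hj k (Finset.mem_range.mp hk), mul_zero]
    rw [h0, zero_add]
    have hc1 : p.coeff ε = 1 := by rw [← hdeg]; exact hmonic.coeff_natDegree
    rw [hc1, one_mul]
    exact hposε j hj
  have hDne : D.Nonempty := by
    obtain ⟨j0, _, hj0⟩ := Finset.exists_mem_eq_sup Finset.univ
      ⟨⟨0, hn⟩, Finset.mem_univ _⟩ (dSet G C)
    exact ⟨j0, Finset.mem_filter.mpr ⟨Finset.mem_univ _, hj0.symm⟩⟩
  have hinner : 0 < ∑ j ∈ D, w j * ν j :=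
    Finset.sum_pos (fun j hj => mul_pos (hwpos j hj) (hν j)) hDne
  have hinner_eq : (⟪w, ρD⟫ : ℝ) = ∑ j ∈ D, w j * ν j := by
    rw [PiLp.inner_apply]
    simp only [RCLike.inner_apply, starRingEnd_apply, star_trivial]
    simp_rw [mul_comm (ρD.ofLp _), hρD]
    unfold rho
    simp_rw [mul_ite, mul_zero]
    rw [Finset.sum_ite_mem, Finset.univ_inter]
  -- conclusion
  by_contra hnotin
  apply hnotin
  show eigProj (G.adjMatrix ℝ) μl (rho ν D) ≠ 0
  intro hproj0
  have hz : (⟪w, ρD⟫ : ℝ) = 0 := by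
    rw [hw1, sum_inner]
    apply Finset.sum_eq_zero
    intro i _
    rw [real_inner_smul_left]
    rcases eq_or_ne (lam i) μl with he | hne
    · have hd0 : (⟪b i, ρD⟫ : ℝ) = 0 := (projZero_iff hsym μl ρD).mp hproj0 i he
      rw [hd0, mul_zero]
    · by_cases hci : (⟪b i, ρC⟫ : ℝ) = 0
      · rw [hci, zero_mul, zero_mul]
      · have hmem : lam i ∈ Λ.erase μl := Finset.mem_erase.mpr ⟨hne,
          Finset.mem_image.mpr ⟨i, Finset.mem_filter.mpr ⟨Finset.mem_univ _, hci⟩, rfl⟩⟩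
        rw [hpeval0 _ hmem, mul_zero, zero_mul]
  rw [hinner_eq] at hz
  linarith
end
end

section
/- Let C be an extremal set in a finite simple connected graph Γ with antipodal set D, and let μ_l be a C-local eigenvalue. Then ⟨z_C(μ_l), z_D(μ_l)⟩ = (−1)^l·(π₀(C)/π_l(C))·(‖ρC‖·‖ρD‖/‖ν‖²), where z_C(μ_l) and z_D(μ_l) are the projections of e_C and e_D onto the μ_l-eigenspace. In particular this inner product is nonzero and its sign is (−1)^l. -/
open Finset Polynomial BigOperators
open scoped Classical

noncomputable section

/-! ### Auxiliary material -/

/-- The nodal polynomial `∏_{h ≠ l} (X - μ h)`. -/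
def Npoly {d : ℕ} (μ : Fin (d + 1) → ℝ) (l : Fin (d + 1)) : Polynomial ℝ :=
  ∏ h ∈ Finset.univ.erase l, (X - Polynomial.C (μ h))

lemma inner_eq {n : ℕ} (x y : EuclideanSpace ℝ (Fin n)) :
    (inner ℝ x y : ℝ) = ∑ i, x i * y i := by
  simp [PiLp.inner_apply, mul_comm]

lemma adj_symmetric {n : ℕ} (G : SimpleGraph (Fin n)) [DecidableRel G.Adj] :
    (Matrix.toEuclideanLin (G.adjMatrix ℝ)).IsSymmetric := by
  rw [← Matrix.isHermitian_iff_isSymmetric, Matrix.IsHermitian]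
  simpa using (SimpleGraph.isSymm_adjMatrix G)

lemma pow_apply_euc {n : ℕ} (A : Matrix (Fin n) (Fin n) ℝ) (k : ℕ) :
    ∀ (w : EuclideanSpace ℝ (Fin n)), ((Matrix.toEuclideanLin A) ^ k) w = (A ^ k).mulVec w := by
  induction k with
  | zero => intro w; rw [pow_zero, pow_zero, Matrix.one_mulVec]; rfl
  | succ m ih =>
      intro w
      rw [pow_succ, pow_succ, Module.End.mul_apply]
      have h1 : Matrix.toEuclideanLin A w = A.mulVec w := rfl
      rw [ih, h1, Matrix.mulVec_mulVec]

lemma aevalVec_eq {n : ℕ} (A : Matrix (Fin n) (Fin n) ℝ) (p : Polynomial ℝ)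
    (v : EuclideanSpace ℝ (Fin n)) :
    aevalVec A p v = (Polynomial.aeval (Matrix.toEuclideanLin A) p) v := by
  unfold aevalVec
  induction p using Polynomial.induction_on' with
  | add p q hp hq => rw [map_add, map_add, Matrix.add_mulVec, WithLp.toLp_add, hp, hq]; rfl
  | monomial k c =>
      rw [aeval_monomial, aeval_monomial]
      have : ((algebraMap ℝ (Matrix (Fin n) (Fin n) ℝ)) c * A ^ k).mulVec v
          = c • (A ^ k).mulVec v := by
        rw [Algebra.algebraMap_eq_smul_one, smul_mul_assoc, one_mul, Matrix.smul_mulVec]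
      rw [this, ← pow_apply_euc]
      rw [Algebra.algebraMap_eq_smul_one, smul_mul_assoc, one_mul]
      rfl

lemma eigProj_mem {n : ℕ} (A : Matrix (Fin n) (Fin n) ℝ) (κ : ℝ)
    (v : EuclideanSpace ℝ (Fin n)) : eigProj A κ v ∈ eigSp A κ :=
  (Submodule.orthogonalProjection (eigSp A κ) v).2

lemma eigProj_smul {n : ℕ} (A : Matrix (Fin n) (Fin n) ℝ) (κ : ℝ) (c : ℝ)
    (x : EuclideanSpace ℝ (Fin n)) : eigProj A κ (c • x) = c • eigProj A κ x := by
  unfold eigProj; rw [map_smul]; rfl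

lemma eigProj_inner_eigProj {n : ℕ} (A : Matrix (Fin n) (Fin n) ℝ) (κ : ℝ)
    (x y : EuclideanSpace ℝ (Fin n)) :
    (inner ℝ (eigProj A κ x) (eigProj A κ y) : ℝ) = inner ℝ (eigProj A κ x) y := by
  unfold eigProj
  calc (inner ℝ ((Submodule.orthogonalProjection (eigSp A κ) x : EuclideanSpace ℝ (Fin n)))
        ((Submodule.orthogonalProjection (eigSp A κ) y : EuclideanSpace ℝ (Fin n))) : ℝ)
      = inner ℝ (Submodule.orthogonalProjection (eigSp A κ) x) (Submodule.orthogonalProjection (eigSp A κ) y) :=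
        ((eigSp A κ).coe_inner _ _).symm
    _ = inner ℝ ((Submodule.orthogonalProjection (eigSp A κ) x : EuclideanSpace ℝ (Fin n))) y :=
        Submodule.inner_orthogonalProjectionOnto_eq_of_mem_left (K := eigSp A κ)
          ((Submodule.orthogonalProjection (eigSp A κ)) x) y

lemma rho_ne_zero {n : ℕ} (ν : EuclideanSpace ℝ (Fin n)) (hν : ∀ i, 0 < ν i)
    {S : Finset (Fin n)} (hS : S.Nonempty) : rho ν S ≠ 0 := by
  obtain ⟨i, hi⟩ := hS
  intro h
  have : rho ν S i = 0 := by rw [h]; rfl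
  rw [rho] at this
  simp [hi] at this
  exact (hν i).ne' this

lemma inner_nu_rho {n : ℕ} (ν : EuclideanSpace ℝ (Fin n)) (S : Finset (Fin n)) :
    (inner ℝ ν (rho ν S) : ℝ) = ‖rho ν S‖ ^ 2 := by
  rw [← real_inner_self_eq_norm_sq]
  simp only [PiLp.inner_apply, RCLike.inner_apply, conj_trivial, rho]
  refine Finset.sum_congr rfl fun i _ => ?_
  by_cases h : i ∈ S <;> simp [h]

section Sym

variable {n : ℕ} {A : Matrix (Fin n) (Fin n) ℝ} (hsym : (Matrix.toEuclideanLin A).IsSymmetric)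

lemma eigProj_of_mem (κ : ℝ) {w : EuclideanSpace ℝ (Fin n)} (hw : w ∈ eigSp A κ) :
    eigProj A κ w = w := by
  unfold eigProj
  exact Submodule.starProjection_eq_self_iff.2 hw

include hsym

lemma eigProj_of_ortho {κ θ : ℝ} (hne : κ ≠ θ) {w : EuclideanSpace ℝ (Fin n)}
    (hw : w ∈ eigSp A θ) : eigProj A κ w = 0 := by
  unfold eigProj
  have hmem : w ∈ (eigSp A κ)ᗮ := by
    intro v hv
    have h1 : Matrix.toEuclideanLin A v = κ • v := Module.End.mem_eigenspace_iff.1 hv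
    have h2 : Matrix.toEuclideanLin A w = θ • w := Module.End.mem_eigenspace_iff.1 hw
    have := hsym v w
    rw [h1, h2, inner_smul_left, inner_smul_right] at this
    simp only [conj_trivial] at this
    have hzero : (κ - θ) * (inner ℝ v w : ℝ) = 0 := by ring_nf; linarith [this]
    rcases mul_eq_zero.1 hzero with h | h
    · exact absurd (sub_eq_zero.1 h) hne
    · exact h
  rw [Submodule.orthogonalProjectionOnto_apply_of_mem_orthogonal hmem]
  rfl

lemma exists_dfinsupp (x : EuclideanSpace ℝ (Fin n)) :
    ∃ f : Π₀ κ : ℝ, (eigSp A κ), (f.sum fun _ xi => (xi : EuclideanSpace ℝ (Fin n))) = x := by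
  have htop : (⨆ κ : ℝ, eigSp A κ) = ⊤ := by
    have hbot := hsym.orthogonalComplement_iSup_eigenspaces_eq_bot
    rw [Submodule.orthogonal_eq_bot_iff] at hbot
    exact hbot
  have hx : x ∈ ⨆ κ : ℝ, eigSp A κ := htop ▸ Submodule.mem_top
  exact (Submodule.mem_iSup_iff_exists_dfinsupp' _ x).1 hx

lemma eigProj_dfinsupp (f : Π₀ κ : ℝ, (eigSp A κ)) (κ : ℝ) :
    eigProj A κ (f.sum fun _ xi => (xi : EuclideanSpace ℝ (Fin n))) = f κ := by
  rw [DFinsupp.sum]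
  have hmap : eigProj A κ (∑ θ ∈ f.support, ((f θ : EuclideanSpace ℝ (Fin n)))) =
      ∑ θ ∈ f.support, eigProj A κ ((f θ : EuclideanSpace ℝ (Fin n))) := by
    unfold eigProj
    rw [map_sum]
    exact AddSubmonoidClass.coe_finset_sum _ _
  rw [hmap]
  by_cases hκ : κ ∈ f.support
  · rw [Finset.sum_eq_single_of_mem κ hκ]
    · exact eigProj_of_mem κ (f κ).2
    · intro θ _ hθ
      exact eigProj_of_ortho hsym (Ne.symm hθ) (f θ).2
  · rw [Finset.sum_eq_zero, DFinsupp.notMem_support_iff.1 hκ]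
    · simp
    · intro θ hθ
      have : θ ≠ κ := by rintro rfl; exact hκ hθ
      exact eigProj_of_ortho hsym (Ne.symm this) (f θ).2

end Sym

section Main

variable {n : ℕ} (G : SimpleGraph (Fin n)) [DecidableRel G.Adj]
  (ν : EuclideanSpace ℝ (Fin n))
  (C : Finset (Fin n))
  {d : ℕ} (μ : Fin (d + 1) → ℝ)

lemma decomp (hμa : StrictAnti μ) (hμr : Set.range μ = evloc (G.adjMatrix ℝ) ν C) :
    rho ν C = ∑ h : Fin (d + 1), eigProj (G.adjMatrix ℝ) (μ h) (rho ν C) := by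
  have hsym := adj_symmetric G
  obtain ⟨f, hf⟩ := exists_dfinsupp hsym (rho ν C)
  have hproj : ∀ κ, eigProj (G.adjMatrix ℝ) κ (rho ν C)
      = ((f κ : EuclideanSpace ℝ (Fin n))) := by
    intro κ; rw [← hf]; exact eigProj_dfinsupp hsym f κ
  have hsupp : f.support = Finset.univ.image μ := by
    ext κ
    rw [DFinsupp.mem_support_iff, Finset.mem_image]
    constructor
    · intro hκ
      have : κ ∈ evloc (G.adjMatrix ℝ) ν C := by
        simp only [evloc, Set.mem_setOf_eq, hproj κ]
        exact fun h => hκ (Subtype.coe_injective h)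
      rw [← hμr] at this
      obtain ⟨h, hh⟩ := this
      exact ⟨h, Finset.mem_univ h, hh⟩
    · rintro ⟨h, -, rfl⟩
      have : μ h ∈ evloc (G.adjMatrix ℝ) ν C := by rw [← hμr]; exact ⟨h, rfl⟩
      simp only [evloc, Set.mem_setOf_eq, hproj (μ h)] at this
      intro h0
      exact this (by rw [h0]; rfl)
  calc rho ν C = f.sum fun _ xi => (xi : EuclideanSpace ℝ (Fin n)) := hf.symm
    _ = ∑ κ ∈ f.support, ((f κ : EuclideanSpace ℝ (Fin n))) := by rw [DFinsupp.sum]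
    _ = ∑ κ ∈ Finset.univ.image μ, ((f κ : EuclideanSpace ℝ (Fin n))) := by rw [hsupp]
    _ = ∑ h : Fin (d + 1), ((f (μ h) : EuclideanSpace ℝ (Fin n))) := by
        rw [Finset.sum_image (fun a _ b _ hab => hμa.injective hab)]
    _ = ∑ h : Fin (d + 1), eigProj (G.adjMatrix ℝ) (μ h) (rho ν C) := by
        refine Finset.sum_congr rfl fun h _ => ?_
        rw [hproj (μ h)]

lemma spectral_action (hμa : StrictAnti μ)
    (hμr : Set.range μ = evloc (G.adjMatrix ℝ) ν C) (p : Polynomial ℝ) :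
    aevalVec (G.adjMatrix ℝ) p (rho ν C)
      = ∑ h : Fin (d + 1), p.eval (μ h) • eigProj (G.adjMatrix ℝ) (μ h) (rho ν C) := by
  rw [aevalVec_eq]
  conv_lhs => rw [decomp G ν C μ hμa hμr]
  rw [map_sum]
  refine Finset.sum_congr rfl fun h _ => ?_
  by_cases h0 : eigProj (G.adjMatrix ℝ) (μ h) (rho ν C) = 0
  · rw [h0, smul_zero, map_zero]
  · exact Module.End.aeval_apply_of_hasEigenvector ⟨eigProj_mem _ _ _, h0⟩

lemma lagrange_proj (hμa : StrictAnti μ)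
    (hμr : Set.range μ = evloc (G.adjMatrix ℝ) ν C) (l : Fin (d + 1)) :
    eigProj (G.adjMatrix ℝ) (μ l) (rho ν C)
      = (∏ h ∈ Finset.univ.erase l, (μ l - μ h))⁻¹ •
          aevalVec (G.adjMatrix ℝ) (Npoly μ l) (rho ν C) := by
  have hprod_ne : (∏ h ∈ Finset.univ.erase l, (μ l - μ h)) ≠ 0 := by
    refine Finset.prod_ne_zero_iff.2 fun h hh => ?_
    have : h ≠ l := Finset.ne_of_mem_erase hh
    exact sub_ne_zero.2 fun he => this (hμa.injective he.symm)
  rw [spectral_action G ν C μ hμa hμr]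
  have heval : ∀ h : Fin (d + 1), (Npoly μ l).eval (μ h)
      = if h = l then ∏ h' ∈ Finset.univ.erase l, (μ l - μ h') else 0 := by
    intro h
    unfold Npoly
    rw [eval_prod]
    by_cases hh : h = l
    · subst hh
      simp
    · rw [if_neg hh]
      refine Finset.prod_eq_zero (Finset.mem_erase.2 ⟨hh, Finset.mem_univ h⟩) ?_
      simp
  rw [Finset.sum_congr rfl (fun h _ => by rw [heval h])]
  simp only [ite_smul, zero_smul]
  rw [Finset.sum_ite_eq' Finset.univ l]
  simp only [Finset.mem_univ, if_true]
  rw [smul_smul, inv_mul_cancel₀ hprod_ne, one_smul]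

end Main
section Part2

variable {n : ℕ} (G : SimpleGraph (Fin n)) [DecidableRel G.Adj]
  (ν : EuclideanSpace ℝ (Fin n))
  (C : Finset (Fin n)) {d : ℕ} (μ : Fin (d + 1) → ℝ)

lemma dSet_le_dist {i j : Fin n} (hj : j ∈ C) : dSet G C i ≤ G.dist i j :=
  Nat.sInf_le ⟨j, hj, rfl⟩

lemma pow_entry_eq_zero {i j : Fin n} {k : ℕ} (hk : G.dist i j > k) :
    ((G.adjMatrix ℝ) ^ k) i j = 0 := by
  rw [SimpleGraph.adjMatrix_pow_apply_eq_card_walk]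
  have : IsEmpty {p : G.Walk i j | p.length = k} := by
    constructor
    rintro ⟨p, hp⟩
    have := SimpleGraph.dist_le p
    rw [hp] at this
    omega
  rw [Fintype.card_eq_zero]
  norm_num

lemma vanish_mono {i : Fin n} (hi : dSet G C i = d) {k : ℕ} (hk : k < d) :
    ((G.adjMatrix ℝ) ^ k).mulVec (rho ν C) i = 0 := by
  rw [Matrix.mulVec]
  simp only [dotProduct]
  refine Finset.sum_eq_zero fun j _ => ?_
  by_cases hj : j ∈ C
  · have hd : G.dist i j > k := by
      have := dSet_le_dist G C (i := i) hj
      omega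
    rw [pow_entry_eq_zero G hd, zero_mul]
  · have : rho ν C j = 0 := by rw [rho]; simp [hj]
    rw [this, mul_zero]

lemma vanish (q : Polynomial ℝ) (hq : ∀ k, d ≤ k → q.coeff k = 0) :
    (inner ℝ (aevalVec (G.adjMatrix ℝ) q (rho ν C)) (rho ν (subcons G C d)) : ℝ) = 0 := by
  have hcoord : ∀ i, dSet G C i = d → aevalVec (G.adjMatrix ℝ) q (rho ν C) i = 0 := by
    intro i hi
    by_cases hq0 : q = 0
    · subst hq0; simp only [aevalVec, map_zero, Matrix.zero_mulVec]; rfl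
    have hdeg : q.natDegree < d := by
      by_contra hle
      push_neg at hle
      exact (Polynomial.leadingCoeff_ne_zero.2 hq0) (hq q.natDegree hle)
    unfold aevalVec
    rw [Polynomial.aeval_eq_sum_range' hdeg]
    have : (∑ k ∈ Finset.range d, q.coeff k • (G.adjMatrix ℝ) ^ k).mulVec (rho ν C)
        = ∑ k ∈ Finset.range d, q.coeff k • ((G.adjMatrix ℝ) ^ k).mulVec (rho ν C) := by
      funext j
      rw [Matrix.mulVec, dotProduct]
      simp only [Finset.sum_apply, Matrix.sum_apply, Finset.sum_mul, Matrix.smul_apply, PiLp.smul_apply,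
        Matrix.mulVec, dotProduct, smul_eq_mul, Finset.mul_sum]
      rw [Finset.sum_comm]
      refine Finset.sum_congr rfl fun k _ => ?_
      rw [Pi.smul_apply, Matrix.mulVec, dotProduct, smul_eq_mul, Finset.mul_sum]
      exact Finset.sum_congr rfl fun jj _ => by ring
    rw [this]
    have : (∑ k ∈ Finset.range d, q.coeff k • ((G.adjMatrix ℝ) ^ k).mulVec (rho ν C)) i
        = ∑ k ∈ Finset.range d, q.coeff k * (((G.adjMatrix ℝ) ^ k).mulVec (rho ν C) i) := by
      rw [Finset.sum_apply]
      rfl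
    rw [WithLp.ofLp_toLp, this]
    refine Finset.sum_eq_zero fun k hk => ?_
    rw [vanish_mono G ν C hi (Finset.mem_range.1 hk), mul_zero]
  rw [inner_eq]
  refine Finset.sum_eq_zero fun i _ => ?_
  by_cases hi : i ∈ subcons G C d
  · rw [hcoord i ((Finset.mem_filter.1 hi).2), zero_mul]
  · have : rho ν (subcons G C d) i = 0 := by rw [rho]; simp [hi]
    rw [this, mul_zero]

lemma sign_prod (hμa : StrictAnti μ) (l : Fin (d + 1)) :
    ∏ h ∈ Finset.univ.erase l, (μ l - μ h) = (-1 : ℝ) ^ (l : ℕ) * piC μ l := by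
  have hfac : ∀ h ∈ Finset.univ.erase l,
      μ l - μ h = (if h < l then (-1 : ℝ) else 1) * |μ l - μ h| := by
    intro h hh
    have hne : h ≠ l := Finset.ne_of_mem_erase hh
    by_cases hlt : h < l
    · have : μ l - μ h < 0 := sub_neg.2 (hμa hlt)
      rw [if_pos hlt, abs_of_neg this]; ring
    · have hgt : l < h := lt_of_le_of_ne (not_lt.1 hlt) (Ne.symm hne)
      have : 0 < μ l - μ h := sub_pos.2 (hμa hgt)
      rw [if_neg hlt, abs_of_pos this, one_mul]
  rw [Finset.prod_congr rfl hfac, Finset.prod_mul_distrib]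
  have hsign : (∏ h ∈ Finset.univ.erase l, (if h < l then (-1 : ℝ) else 1))
      = (-1 : ℝ) ^ (l : ℕ) := by
    rw [Finset.prod_ite, Finset.prod_const, Finset.prod_const, one_pow, mul_one]
    congr 1
    have : (Finset.univ.erase l).filter (fun h => h < l) = Finset.Iio l := by
      ext h
      simp only [Finset.mem_filter, Finset.mem_erase, Finset.mem_univ, Finset.mem_Iio,
        true_and, and_true]
      exact ⟨fun ⟨_, h2⟩ => h2, fun h2 => ⟨ne_of_lt h2, h2⟩⟩
    rw [this, Fin.card_Iio]
  rw [hsign]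
  rfl

lemma piC_pos (hμa : StrictAnti μ) (l : Fin (d + 1)) : 0 < piC μ l := by
  refine Finset.prod_pos fun h hh => ?_
  have : μ l ≠ μ h := fun he => (Finset.ne_of_mem_erase hh) (hμa.injective he.symm)
  exact abs_pos.2 (sub_ne_zero.2 this)

lemma D_nonempty (hn : 0 < n) (hext : eccS G C = d) : (subcons G C d).Nonempty := by
  have : Nonempty (Fin n) := Fin.pos_iff_nonempty.1 hn
  obtain ⟨i, -, hi⟩ := Finset.exists_mem_eq_sup Finset.univ Finset.univ_nonempty (dSet G C)
  exact ⟨i, Finset.mem_filter.2 ⟨Finset.mem_univ i, by rw [← hi, ← eccS]; exact hext⟩⟩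

end Part2
section Part3

variable {n : ℕ} (G : SimpleGraph (Fin n)) [DecidableRel G.Adj]
  {ν : EuclideanSpace ℝ (Fin n)} {lam0 : ℝ}

lemma adj_entry_nonneg (i j : Fin n) : (0:ℝ) ≤ (G.adjMatrix ℝ) i j := by
  rw [SimpleGraph.adjMatrix_apply]
  by_cases h : G.Adj i j <;> simp [h]

lemma nu_mem_eigSp (hPerron : (G.adjMatrix ℝ).mulVec ν = lam0 • ν) :
    ν ∈ eigSp (G.adjMatrix ℝ) lam0 := by
  rw [eigSp, Module.End.mem_eigenspace_iff]
  exact congrArg (WithLp.toLp 2) hPerron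

lemma eig_le (hν : ∀ i, 0 < ν i) (hPerron : (G.adjMatrix ℝ).mulVec ν = lam0 • ν)
    {κ : ℝ} {w : EuclideanSpace ℝ (Fin n)} (hw : w ∈ eigSp (G.adjMatrix ℝ) κ)
    (hw0 : w ≠ 0) : κ ≤ lam0 := by
  set A := G.adjMatrix ℝ with hA
  have hAw : ∀ i, A.mulVec w i = κ * w i := by
    intro i
    have h := Module.End.mem_eigenspace_iff.1 hw
    have : A.mulVec w = κ • w := congrArg WithLp.ofLp h
    rw [this]; rfl
  have habs : ∀ i, |κ| * |w i| ≤ ∑ j, A i j * |w j| := by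
    intro i
    calc |κ| * |w i| = |κ * w i| := (abs_mul κ (w i)).symm
      _ = |A.mulVec w i| := by rw [hAw i]
      _ = |∑ j, A i j * w j| := by rw [Matrix.mulVec, dotProduct]
      _ ≤ ∑ j, |A i j * w j| := Finset.abs_sum_le_sum_abs _ _
      _ = ∑ j, A i j * |w j| := by
          refine Finset.sum_congr rfl fun j _ => ?_
          rw [abs_mul, abs_of_nonneg (adj_entry_nonneg G i j)]
  set s := ∑ i, ν i * |w i| with hs_def
  have hs : 0 < s := by
    have hex : ∃ i, w i ≠ 0 := by
      by_contra hc
      push_neg at hc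
      exact hw0 (PiLp.ext hc)
    obtain ⟨i, hi⟩ := hex
    refine Finset.sum_pos' (fun j _ => mul_nonneg (hν j).le (abs_nonneg _)) ?_
    exact ⟨i, Finset.mem_univ i, mul_pos (hν i) (abs_pos.2 hi)⟩
  have hcol : ∀ j, ∑ i, ν i * A i j = lam0 * ν j := by
    intro j
    have hsymm : ∀ i, A i j = A j i := by
      intro i
      rw [hA, SimpleGraph.adjMatrix_apply, SimpleGraph.adjMatrix_apply]
      by_cases h : G.Adj i j
      · rw [if_pos h, if_pos ((G.adj_comm i j).1 h)]
      · rw [if_neg h, if_neg fun h' => h ((G.adj_comm j i).1 h')]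
    calc ∑ i, ν i * A i j = ∑ i, A j i * ν i := by
          refine Finset.sum_congr rfl fun i _ => ?_
          rw [hsymm i]; ring
      _ = A.mulVec ν j := by rw [Matrix.mulVec, dotProduct]
      _ = lam0 * ν j := by rw [hPerron]; rfl
  have hkey : |κ| * s ≤ lam0 * s := by
    calc |κ| * s = ∑ i, ν i * (|κ| * |w i|) := by
          rw [hs_def, Finset.mul_sum]
          exact Finset.sum_congr rfl fun i _ => by ring
      _ ≤ ∑ i, ν i * ∑ j, A i j * |w j| := by
          refine Finset.sum_le_sum fun i _ => ?_
          exact mul_le_mul_of_nonneg_left (habs i) (hν i).le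
      _ = ∑ j, (∑ i, ν i * A i j) * |w j| := by
          simp only [Finset.mul_sum, Finset.sum_mul]
          rw [Finset.sum_comm]
          exact Finset.sum_congr rfl fun j _ => Finset.sum_congr rfl fun i _ => by ring
      _ = ∑ j, lam0 * (ν j * |w j|) := by
          refine Finset.sum_congr rfl fun j _ => ?_
          rw [hcol j]; ring
      _ = lam0 * s := by rw [hs_def, Finset.mul_sum]
  have habs_le : |κ| ≤ lam0 := le_of_mul_le_mul_right (by linarith [hkey]) hs
  exact (le_abs_self κ).trans habs_le

lemma perron_simple (hn : 0 < n) (hconn : G.Connected) (hν : ∀ i, 0 < ν i)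
    (hPerron : (G.adjMatrix ℝ).mulVec ν = lam0 • ν)
    {w : EuclideanSpace ℝ (Fin n)} (hw : w ∈ eigSp (G.adjMatrix ℝ) lam0)
    (hwv : (inner ℝ w ν : ℝ) = 0) : w = 0 := by
  set A := G.adjMatrix ℝ with hA
  have : Nonempty (Fin n) := Fin.pos_iff_nonempty.1 hn
  obtain ⟨i0, -, hmax⟩ := Finset.exists_max_image Finset.univ (fun i => w i / ν i)
    Finset.univ_nonempty
  set t := w i0 / ν i0 with ht
  set u : EuclideanSpace ℝ (Fin n) := t • ν - w with hu
  have hu_apply : ∀ i, u i = t * ν i - w i := fun i => rfl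
  have hu_nonneg : ∀ i, 0 ≤ u i := by
    intro i
    rw [hu_apply i, sub_nonneg]
    have := hmax i (Finset.mem_univ i)
    calc w i = (w i / ν i) * ν i := by field_simp [(hν i).ne']
      _ ≤ t * ν i := mul_le_mul_of_nonneg_right this (hν i).le
  have hu_mem : u ∈ eigSp A lam0 :=
    Submodule.sub_mem _ (Submodule.smul_mem _ t (nu_mem_eigSp G hPerron)) hw
  have hu_eq : ∀ i, A.mulVec u i = lam0 * u i := by
    intro i
    have h : A.mulVec u = lam0 • u := congrArg WithLp.ofLp (Module.End.mem_eigenspace_iff.1 hu_mem)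
    rw [h]; rfl
  have hu_i0 : u i0 = 0 := by
    rw [hu_apply i0, ht, div_mul_cancel₀ _ (hν i0).ne', sub_self]
  have step : ∀ i, u i = 0 → ∀ j, G.Adj i j → u j = 0 := by
    intro i hi j hij
    have hsum : ∑ k, A i k * u k = 0 := by
      have := hu_eq i
      rw [Matrix.mulVec, dotProduct] at this
      rw [this, hi, mul_zero]
    have hterm := (Finset.sum_eq_zero_iff_of_nonneg
      (fun k _ => mul_nonneg (adj_entry_nonneg G i k) (hu_nonneg k))).1 hsum j
      (Finset.mem_univ j)
    rw [SimpleGraph.adjMatrix_apply, if_pos hij, one_mul] at hterm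
    exact hterm
  have key : ∀ (a b : Fin n) (p : G.Walk a b), u a = 0 → u b = 0 := by
    intro a b p
    induction p with
    | nil => exact id
    | cons h q ih => exact fun ha => ih (step _ ha _ h)
  have hall : ∀ j, u j = 0 := by
    intro j
    obtain ⟨p⟩ := hconn i0 j
    exact key _ _ p hu_i0
  have hw_eq : ∀ i, w i = t * ν i := by
    intro i
    have := hall i
    rw [hu_apply i, sub_eq_zero] at this
    exact this.symm
  have ht0 : t = 0 := by
    have h1 : (inner ℝ w ν : ℝ) = t * ∑ i, ν i * ν i := by
      rw [inner_eq, Finset.mul_sum]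
      exact Finset.sum_congr rfl fun i _ => by rw [hw_eq i]; ring
    have h2 : 0 < ∑ i, ν i * ν i :=
      Finset.sum_pos (fun i _ => mul_pos (hν i) (hν i)) Finset.univ_nonempty
    rw [hwv] at h1
    rcases mul_eq_zero.1 h1.symm with h | h
    · exact h
    · exact absurd h h2.ne'
  refine PiLp.ext fun i => ?_
  rw [hw_eq i, ht0, zero_mul]; rfl

end Part3
section Part4

variable {n : ℕ} (G : SimpleGraph (Fin n)) [DecidableRel G.Adj]
  {ν : EuclideanSpace ℝ (Fin n)} {lam0 : ℝ}
  (C : Finset (Fin n)) {d : ℕ} (μ : Fin (d + 1) → ℝ)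

lemma inner_eigProj_nu (hPerron : (G.adjMatrix ℝ).mulVec ν = lam0 • ν)
    (x : EuclideanSpace ℝ (Fin n)) :
    (inner ℝ (eigProj (G.adjMatrix ℝ) lam0 x) ν : ℝ) = inner ℝ x ν := by
  unfold eigProj
  rw [← Submodule.starProjection_apply, Submodule.inner_starProjection_left_eq_right, Submodule.starProjection_apply]
  have h := eigProj_of_mem (A := G.adjMatrix ℝ) lam0 (nu_mem_eigSp G hPerron)
  unfold eigProj at h
  rw [show ((Submodule.orthogonalProjection (eigSp (G.adjMatrix ℝ) lam0) ν : EuclideanSpace ℝ (Fin n))) = ν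
    from h]

lemma eigProj_top_ne_zero (hν : ∀ i, 0 < ν i)
    (hPerron : (G.adjMatrix ℝ).mulVec ν = lam0 • ν) (hC : C.Nonempty) :
    eigProj (G.adjMatrix ℝ) lam0 (rho ν C) ≠ 0 := by
  intro h0
  have h1 : (inner ℝ (eigProj (G.adjMatrix ℝ) lam0 (rho ν C)) ν : ℝ) = inner ℝ (rho ν C) ν :=
    inner_eigProj_nu G hPerron (rho ν C)
  rw [h0, inner_zero_left] at h1
  have h2 : (inner ℝ (rho ν C) ν : ℝ) = ‖rho ν C‖ ^ 2 := by
    rw [real_inner_comm]; exact inner_nu_rho ν C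
  have h3 : rho ν C ≠ 0 := rho_ne_zero ν hν hC
  have hpos : (0:ℝ) < ‖rho ν C‖ ^ 2 := pow_pos (norm_pos_iff.2 h3) 2
  rw [h2] at h1
  exact hpos.ne' h1.symm

lemma mu_zero (hν : ∀ i, 0 < ν i) (hPerron : (G.adjMatrix ℝ).mulVec ν = lam0 • ν)
    (hC : C.Nonempty) (hμa : StrictAnti μ)
    (hμr : Set.range μ = evloc (G.adjMatrix ℝ) ν C) : μ 0 = lam0 := by
  have hin : lam0 ∈ evloc (G.adjMatrix ℝ) ν C :=
    eigProj_top_ne_zero G C hν hPerron hC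
  rw [← hμr] at hin
  obtain ⟨k, hk⟩ := hin
  have h1 : lam0 ≤ μ 0 := by
    rw [← hk]
    exact hμa.antitone (Fin.zero_le k)
  have h2 : μ 0 ≤ lam0 := by
    have hmem : μ 0 ∈ evloc (G.adjMatrix ℝ) ν C := by rw [← hμr]; exact ⟨0, rfl⟩
    have hne : eigProj (G.adjMatrix ℝ) (μ 0) (rho ν C) ≠ 0 := hmem
    exact eig_le G hν hPerron (eigProj_mem _ _ _) hne
  exact le_antisymm h2 h1

lemma nu_ne_zero (hn : 0 < n) (hν : ∀ i, 0 < ν i) : ν ≠ 0 := by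
  obtain ⟨i⟩ := Fin.pos_iff_nonempty.1 hn
  exact fun h => (hν i).ne' (by rw [h]; rfl)

lemma proj_top (hn : 0 < n) (hconn : G.Connected) (hν : ∀ i, 0 < ν i)
    (hPerron : (G.adjMatrix ℝ).mulVec ν = lam0 • ν) :
    eigProj (G.adjMatrix ℝ) lam0 (rho ν C) = (‖rho ν C‖ ^ 2 / ‖ν‖ ^ 2) • ν := by
  have hνn : ‖ν‖ ≠ 0 := norm_ne_zero_iff.2 (nu_ne_zero hn hν)
  set w : EuclideanSpace ℝ (Fin n) :=
    eigProj (G.adjMatrix ℝ) lam0 (rho ν C) - (‖rho ν C‖ ^ 2 / ‖ν‖ ^ 2) • ν with hw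
  have hwmem : w ∈ eigSp (G.adjMatrix ℝ) lam0 :=
    Submodule.sub_mem _ (eigProj_mem _ _ _)
      (Submodule.smul_mem _ _ (nu_mem_eigSp G hPerron))
  have hwv : (inner ℝ w ν : ℝ) = 0 := by
    rw [hw, inner_sub_left, real_inner_smul_left]
    have h1 : (inner ℝ (eigProj (G.adjMatrix ℝ) lam0 (rho ν C)) ν : ℝ) = ‖rho ν C‖ ^ 2 := by
      rw [inner_eigProj_nu G hPerron, real_inner_comm]
      exact inner_nu_rho ν C
    rw [h1, real_inner_self_eq_norm_sq]
    field_simp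
    ring
  have := perron_simple G hn hconn hν hPerron hwmem hwv
  rw [hw, sub_eq_zero] at this
  exact this

/-- `Npoly` is monic of degree `d`. -/
lemma Npoly_monic (l : Fin (d + 1)) : (Npoly μ l).Monic :=
  monic_prod_of_monic _ _ fun h _ => monic_X_sub_C (μ h)

lemma Npoly_natDegree (l : Fin (d + 1)) : (Npoly μ l).natDegree = d := by
  unfold Npoly
  rw [Polynomial.natDegree_prod _ _ fun h _ => X_sub_C_ne_zero (μ h)]
  simp only [natDegree_X_sub_C]
  rw [Finset.sum_const, Finset.card_erase_of_mem (Finset.mem_univ l)]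
  simp [Fintype.card_fin]

lemma Npoly_coeff_high (l : Fin (d + 1)) {k : ℕ} (hk : d < k) : (Npoly μ l).coeff k = 0 :=
  Polynomial.coeff_eq_zero_of_natDegree_lt (by rw [Npoly_natDegree]; exact hk)

lemma Npoly_coeff_d (l : Fin (d + 1)) : (Npoly μ l).coeff d = 1 := by
  have := (Npoly_monic μ l).coeff_natDegree
  rwa [Npoly_natDegree] at this

end Part4

theorem inner_product_projections {n : ℕ} (hn : 0 < n) (G : SimpleGraph (Fin n)) [DecidableRel G.Adj]
    (hconn : G.Connected)
    (ν : EuclideanSpace ℝ (Fin n)) (hν : ∀ i, 0 < ν i) (lam0 : ℝ)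
    (hPerron : (G.adjMatrix ℝ).mulVec ν = lam0 • ν)
    (C : Finset (Fin n)) (hC : C.Nonempty)
    (d : ℕ) (μ : Fin (d + 1) → ℝ) (hμa : StrictAnti μ)
    (hμr : Set.range μ = evloc (G.adjMatrix ℝ) ν C)
    (hext : eccS G C = d) :
    ∀ l : Fin (d + 1),
      (inner ℝ (eigProj (G.adjMatrix ℝ) (μ l) (unitVec ν C))
             (eigProj (G.adjMatrix ℝ) (μ l) (unitVec ν (subcons G C (eccS G C)))) : ℝ)
        = (-1 : ℝ) ^ (l : ℕ) * (piC μ 0 / piC μ l) *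
            (‖rho ν C‖ * ‖rho ν (subcons G C (eccS G C))‖ / ‖ν‖ ^ 2) ∧
      (inner ℝ (eigProj (G.adjMatrix ℝ) (μ l) (unitVec ν C))
             (eigProj (G.adjMatrix ℝ) (μ l) (unitVec ν (subcons G C (eccS G C)))) : ℝ) ≠ 0 := by
  intro l
  rw [hext]
  have hDne : (subcons G C d).Nonempty := D_nonempty G C hn hext
  have hρCne : rho ν C ≠ 0 := rho_ne_zero ν hν hC
  have hρDne : rho ν (subcons G C d) ≠ 0 := rho_ne_zero ν hν hDne
  have hnC : (0:ℝ) < ‖rho ν C‖ := norm_pos_iff.2 hρCne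
  have hnD : (0:ℝ) < ‖rho ν (subcons G C d)‖ := norm_pos_iff.2 hρDne
  have hnν : (0:ℝ) < ‖ν‖ := norm_pos_iff.2 (nu_ne_zero hn hν)
  have hπ0 : (0:ℝ) < piC μ 0 := piC_pos μ hμa 0
  have hπl : (0:ℝ) < piC μ l := piC_pos μ hμa l
  set s : ℝ := (-1 : ℝ) ^ (l : ℕ) with hs_def
  have hss : s * s = 1 := by rw [hs_def, ← mul_pow]; norm_num
  have hs_inv : s⁻¹ = s := by
    field_simp [show s ≠ 0 from by rw [hs_def]; positivity]  -- may fail; fix below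
    nlinarith [hss]
  -- step 1 : reduce to rho inner ℝ products
  have h1 : (inner ℝ (eigProj (G.adjMatrix ℝ) (μ l) (unitVec ν C))
        (eigProj (G.adjMatrix ℝ) (μ l) (unitVec ν (subcons G C d))) : ℝ)
      = ‖rho ν C‖⁻¹ * (‖rho ν (subcons G C d)‖⁻¹ *
          (inner ℝ (eigProj (G.adjMatrix ℝ) (μ l) (rho ν C)) (rho ν (subcons G C d)) : ℝ)) := by
    rw [unitVec, unitVec, eigProj_smul, eigProj_smul, real_inner_smul_left,
      real_inner_smul_right, eigProj_inner_eigProj]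
  -- step 2 : lagrange
  set cl : ℝ := ∏ h ∈ Finset.univ.erase l, (μ l - μ h) with hcl
  set c0 : ℝ := ∏ h ∈ Finset.univ.erase (0 : Fin (d+1)), (μ 0 - μ h) with hc0
  have hcl_eq : cl = s * piC μ l := by rw [hcl, sign_prod μ hμa l, hs_def]
  have hc0_eq : c0 = piC μ 0 := by
    rw [hc0, sign_prod μ hμa 0]
    norm_num
  have hcl_ne : cl ≠ 0 := by
    rw [hcl_eq]
    refine mul_ne_zero ?_ hπl.ne'
    rw [hs_def]; positivity
  have hc0_ne : c0 ≠ 0 := by rw [hc0_eq]; exact hπ0.ne'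
  have h2 : (inner ℝ (eigProj (G.adjMatrix ℝ) (μ l) (rho ν C)) (rho ν (subcons G C d)) : ℝ)
      = cl⁻¹ * (inner ℝ (aevalVec (G.adjMatrix ℝ) (Npoly μ l) (rho ν C))
          (rho ν (subcons G C d)) : ℝ) := by
    rw [lagrange_proj G ν C μ hμa hμr l, real_inner_smul_left]
  -- step 3 : degree reduction
  have h3 : (inner ℝ (aevalVec (G.adjMatrix ℝ) (Npoly μ l) (rho ν C))
        (rho ν (subcons G C d)) : ℝ)
      = (inner ℝ (aevalVec (G.adjMatrix ℝ) (Npoly μ 0) (rho ν C))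
        (rho ν (subcons G C d)) : ℝ) := by
    have hquot : ∀ k, d ≤ k → (Npoly μ l - Npoly μ 0).coeff k = 0 := by
      intro k hk
      rw [Polynomial.coeff_sub]
      rcases eq_or_lt_of_le hk with rfl | hlt
      · rw [Npoly_coeff_d, Npoly_coeff_d, sub_self]
      · rw [Npoly_coeff_high μ l hlt, Npoly_coeff_high μ 0 hlt, sub_self]
    have hvan := vanish G ν C (Npoly μ l - Npoly μ 0) hquot
    have hsub : aevalVec (G.adjMatrix ℝ) (Npoly μ l - Npoly μ 0) (rho ν C)
        = aevalVec (G.adjMatrix ℝ) (Npoly μ l) (rho ν C)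
          - aevalVec (G.adjMatrix ℝ) (Npoly μ 0) (rho ν C) := by
      unfold aevalVec
      rw [map_sub, Matrix.sub_mulVec, WithLp.toLp_sub]
    rw [hsub, inner_sub_left] at hvan
    linarith [hvan]
  -- step 4 : back to projection at μ 0
  have h4 : (inner ℝ (aevalVec (G.adjMatrix ℝ) (Npoly μ 0) (rho ν C))
        (rho ν (subcons G C d)) : ℝ)
      = c0 * (inner ℝ (eigProj (G.adjMatrix ℝ) (μ 0) (rho ν C)) (rho ν (subcons G C d)) : ℝ) := by
    have := lagrange_proj G ν C μ hμa hμr 0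
    rw [this, real_inner_smul_left, ← hc0]
    field_simp
  -- step 5 : evaluate at μ 0
  have h5 : (inner ℝ (eigProj (G.adjMatrix ℝ) (μ 0) (rho ν C)) (rho ν (subcons G C d)) : ℝ)
      = (‖rho ν C‖ ^ 2 / ‖ν‖ ^ 2) * ‖rho ν (subcons G C d)‖ ^ 2 := by
    rw [mu_zero G C μ hν hPerron hC hμa hμr, proj_top G C hn hconn hν hPerron,
      real_inner_smul_left, inner_nu_rho]
  have hval : (inner ℝ (eigProj (G.adjMatrix ℝ) (μ l) (unitVec ν C))
        (eigProj (G.adjMatrix ℝ) (μ l) (unitVec ν (subcons G C d))) : ℝ)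
      = s * (piC μ 0 / piC μ l) *
          (‖rho ν C‖ * ‖rho ν (subcons G C d)‖ / ‖ν‖ ^ 2) := by
    rw [h1, h2, h3, h4, h5, hcl_eq, hc0_eq, mul_inv, hs_inv]
    field_simp
  refine ⟨hval, ?_⟩
  rw [hval]
  have hs_ne : s ≠ 0 := by rw [hs_def]; positivity
  have : (0:ℝ) < (piC μ 0 / piC μ l) * (‖rho ν C‖ * ‖rho ν (subcons G C d)‖ / ‖ν‖ ^ 2) := by
    positivity
  intro hcontr
  rw [mul_assoc] at hcontr
  rcases mul_eq_zero.1 hcontr with h | h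
  · exact hs_ne h
  · exact this.ne' h
end
end
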